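/- Let σ be the tgd r(X,Y) → ∃Z. p(X,Z), where no strict subset of the attributes of P is a superkey of P (the left position X of p is not a superkey). Consider Q(A) :- r(A,B) and Q'(A) :- r(A,B), p(A,C). Then the chase step is unsound under bag-set semantics: the set-valued database D with R = {(a,b)} and P = {(a,c),(a,d)} satisfies {σ} and yields Q(D,BS) = {{(a)}} but Q'(D,BS) = {{(a),(a)}}. -/

import Mathlib

/-- A relational schema: a type of relation symbols with arities. -/
structure Schema where
  Rel : Type
  ar : Rel → ℕ

/-- A relational atom over schema `S`; variables are natural numbers. -/
structure Atom (S : Schema) where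
  rel : S.Rel
  args : Fin (S.ar rel) → ℕ

/-- A conjunctive query: a head (list of variables) and a body (list of atoms). -/
structure CQ (S : Schema) where
  hd : List ℕ
  body : List (Atom S)

variable {S : Schema} {Dom : Type}

def Atom.rename (f : ℕ → ℕ) (a : Atom S) : Atom S := ⟨a.rel, f ∘ a.args⟩

def CQ.rename (f : ℕ → ℕ) (Q : CQ S) : CQ S := ⟨Q.hd.map f, Q.body.map (Atom.rename f)⟩

/-- The variables of a query. -/
def CQ.vars (Q : CQ S) : Set ℕ := {x | x ∈ Q.hd ∨ ∃ a ∈ Q.body, ∃ i, a.args i = x}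

/-- A bag-valued database: a finite multiset of tuples for each relation symbol. -/
abbrev DB (S : Schema) (Dom : Type) := (r : S.Rel) → Multiset (Fin (S.ar r) → Dom)

/-- A set-valued database: every relation is a set. -/
def IsSetDB (D : DB S Dom) : Prop := ∀ r, (D r).Nodup

/-- An assignment satisfies a list of atoms. -/
def Sat (D : DB S Dom) (body : List (Atom S)) (γ : ℕ → Dom) : Prop :=
  ∀ a ∈ body, (γ ∘ a.args) ∈ D a.rel

/-- Bag-semantics weight of an assignment: product of multiplicities of matched tuples. -/
noncomputable def weight (D : DB S Dom) (Q : CQ S) (γ : ℕ → Dom) : ℕ :=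
  (Q.body.map fun (a : Atom S) =>
    letI : DecidableEq (Fin (S.ar a.rel) → Dom) := Classical.decEq _
    (D a.rel).count (γ ∘ a.args)).prod

/-- Canonical assignments: everything outside the query's variables is a default value. -/
def Canon [Inhabited Dom] (Q : CQ S) (γ : ℕ → Dom) : Prop := ∀ x, x ∉ Q.vars → γ x = default

/-- Bag semantics: multiplicity of the tuple `t` in `Q(D, B)`. -/
noncomputable def bagMult [Inhabited Dom] (D : DB S Dom) (Q : CQ S) (t : List Dom) : ℕ :=
  ∑ᶠ γ ∈ {γ : ℕ → Dom | Canon Q γ ∧ Q.hd.map γ = t}, weight D Q γ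

/-- Bag-set semantics: multiplicity of `t` in `Q(D, BS)`: one per satisfying assignment. -/
noncomputable def bsMult [Inhabited Dom] (D : DB S Dom) (Q : CQ S) (t : List Dom) : ℕ :=
  Nat.card {γ : ℕ → Dom // Canon Q γ ∧ Sat D Q.body γ ∧ Q.hd.map γ = t}

/-- Set semantics: the set of tuples returned by `Q` on `D`. -/
def setAns (D : DB S Dom) (Q : CQ S) : Set (List Dom) :=
  {t | ∃ γ : ℕ → Dom, Sat D Q.body γ ∧ Q.hd.map γ = t}

/-- Query isomorphism: a bijective variable renaming preserving head and body (as multiset). -/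
def CQIso (Q1 Q2 : CQ S) : Prop :=
  ∃ e : ℕ ≃ ℕ, Q1.hd.map ⇑e = Q2.hd ∧
    Multiset.map (Atom.rename ⇑e) (Q1.body : Multiset (Atom S)) = (Q2.body : Multiset (Atom S))

/-- A tuple-generating dependency (tgd) `φ → ∃ Z̄ ψ`: left-hand side atoms, right-hand
side atoms, and a finite set of existentially quantified variables. -/
structure TGD (S : Schema) where
  lhs : List (Atom S)
  rhs : List (Atom S)
  exVars : Finset ℕ

/-- An equality-generating dependency (egd) `φ → eq1 = eq2`. -/
structure EGD (S : Schema) where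
  lhs : List (Atom S)
  eq1 : ℕ
  eq2 : ℕ

/-- An embedded dependency: a tgd or an egd. -/
inductive Dep (S : Schema) where
  | tgd : TGD S → Dep S
  | egd : EGD S → Dep S

/-- Well-formedness of a tgd: existential variables do not occur on the left-hand side,
and every non-existential variable of the right-hand side occurs on the left-hand side. -/
def TGD.wf (σ : TGD S) : Prop :=
  (∀ a ∈ σ.lhs, ∀ i, a.args i ∉ σ.exVars) ∧
  (∀ a ∈ σ.rhs, ∀ i, a.args i ∉ σ.exVars → ∃ b ∈ σ.lhs, ∃ j, b.args j = a.args i)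

/-- A database satisfies a tgd. -/
def TGDSat (D : DB S Dom) (σ : TGD S) : Prop :=
  ∀ γ : ℕ → Dom, (∀ a ∈ σ.lhs, (γ ∘ a.args) ∈ D a.rel) →
    ∃ γ' : ℕ → Dom, (∀ x, x ∉ σ.exVars → γ' x = γ x) ∧
      ∀ a ∈ σ.rhs, (γ' ∘ a.args) ∈ D a.rel

/-- A database satisfies an egd. -/
def EGDSat (D : DB S Dom) (e : EGD S) : Prop :=
  ∀ γ : ℕ → Dom, (∀ a ∈ e.lhs, (γ ∘ a.args) ∈ D a.rel) → γ e.eq1 = γ e.eq2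

/-- A database satisfies an embedded dependency. -/
def DSat (D : DB S Dom) : Dep S → Prop
  | .tgd σ => TGDSat D σ
  | .egd e => EGDSat D e

/-- A database satisfies a (finite) set of embedded dependencies. -/
def DBSat (D : DB S Dom) (Δ : List (Dep S)) : Prop := ∀ d ∈ Δ, DSat D d

/-- Chase with tgd `σ` is applicable to `Q` via `h`: `h` maps the left-hand side into the
body of `Q` and cannot be extended to a homomorphism of the whole dependency. -/
def TgdApplicable (σ : TGD S) (Q : CQ S) (h : ℕ → ℕ) : Prop :=
  (∀ a ∈ σ.lhs, a.rename h ∈ Q.body) ∧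
  ¬ ∃ h' : ℕ → ℕ, (∀ x, x ∉ σ.exVars → h' x = h x) ∧ ∀ a ∈ σ.rhs, a.rename h' ∈ Q.body

/-- `h'` extends `h` by mapping the existential variables injectively to fresh variables. -/
def FreshExt (σ : TGD S) (Q : CQ S) (h h' : ℕ → ℕ) : Prop :=
  (∀ x, x ∉ σ.exVars → h' x = h x) ∧ Set.InjOn h' ↑σ.exVars ∧
  ∀ z ∈ σ.exVars, h' z ∉ Q.vars

/-- The result of a tgd chase step: conjoin the instantiated right-hand side. -/
def TgdResult (σ : TGD S) (Q : CQ S) (h' : ℕ → ℕ) : CQ S :=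
  ⟨Q.hd, Q.body ++ σ.rhs.map (Atom.rename h')⟩

/-- A chase step with a tgd. -/
def TgdStep (σ : TGD S) (Q Q' : CQ S) : Prop :=
  ∃ h h' : ℕ → ℕ, TgdApplicable σ Q h ∧ FreshExt σ Q h h' ∧ Q' = TgdResult σ Q h'

/-- A chase step with an egd: identify the two variables it equates. -/
def EgdStep (e : EGD S) (Q Q' : CQ S) : Prop :=
  ∃ h : ℕ → ℕ, (∀ a ∈ e.lhs, a.rename h ∈ Q.body) ∧ h e.eq1 ≠ h e.eq2 ∧
    (Q' = Q.rename (fun x => if x = h e.eq1 then h e.eq2 else x) ∨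
     Q' = Q.rename (fun x => if x = h e.eq2 then h e.eq1 else x))

/-- A chase step with an embedded dependency. -/
def DepStep : Dep S → CQ S → CQ S → Prop
  | .tgd σ => TgdStep σ
  | .egd e => EgdStep e

/-- A (set-semantics) chase step using some dependency from `Δ`. -/
def SetChaseStep (Δ : List (Dep S)) (Q Q' : CQ S) : Prop := ∃ d ∈ Δ, DepStep d Q Q'

/-- A query is a terminal result of set-semantics chase: no chase step applies. -/
def SetTerminal (Δ : List (Dep S)) (Q : CQ S) : Prop := ¬ ∃ Q', SetChaseStep Δ Q Q'

/-- An atom uses variable `v`. -/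
def Atom.uses (a : Atom S) (v : ℕ) : Prop := ∃ i, a.args i = v

/-- Variable `v` occurs in the body of `Q`. -/
def Occurs (v : ℕ) (Q : CQ S) : Prop := ∃ a ∈ Q.body, a.uses v

/-- All variables of a tgd. -/
def TGD.varSet (σ : TGD S) : Set ℕ :=
  {x | (∃ a ∈ σ.lhs, a.uses x) ∨ (∃ a ∈ σ.rhs, a.uses x) ∨ x ∈ σ.exVars}

/-- A regularized tgd: its right-hand side admits no nonshared partition into two nonempty
parts (i.e., parts sharing no existential variable). -/
def Regularized (σ : TGD S) : Prop :=
  ¬ ∃ l1 l2 : List (Atom S), l1 ≠ [] ∧ l2 ≠ [] ∧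
      ((l1 ++ l2 : List (Atom S)) : Multiset (Atom S)) = (σ.rhs : Multiset (Atom S)) ∧
      ∀ v ∈ σ.exVars, ¬ ((∃ a ∈ l1, a.uses v) ∧ (∃ a ∈ l2, a.uses v))

/-- A pair of fresh extensions of `h` with pairwise distinct fresh images (two disjoint
copies of fresh existential variables). -/
def FreshPair (σ : TGD S) (Q : CQ S) (h h1 h2 : ℕ → ℕ) : Prop :=
  FreshExt σ Q h h1 ∧ FreshExt σ Q h h2 ∧
  ∀ z ∈ σ.exVars, ∀ z' ∈ σ.exVars, h1 z ≠ h2 z'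

/-- The associated test query `Q^{σ,h,θ}`: the body of `Q` conjoined with two copies of the
right-hand side of `σ`, instantiated with two disjoint families of fresh variables. -/
def testQuery (σ : TGD S) (Q : CQ S) (h1 h2 : ℕ → ℕ) : CQ S :=
  ⟨Q.hd, Q.body ++ σ.rhs.map (Atom.rename h1) ++ σ.rhs.map (Atom.rename h2)⟩

/-- `σ` is assignment-fixing w.r.t. `Q` and `h`: in every terminal set-chase result of the
associated test query, at most one of the two fresh copies of each existential variable
still occurs. -/
def AssignmentFixing (Δ : List (Dep S)) (σ : TGD S) (Q : CQ S) (h : ℕ → ℕ) : Prop :=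
  ∀ h1 h2 : ℕ → ℕ, FreshPair σ Q h h1 h2 →
    ∀ R : CQ S, Relation.ReflTransGen (SetChaseStep Δ) (testQuery σ Q h1 h2) R →
      SetTerminal Δ R → ∀ z ∈ σ.exVars, ¬ (Occurs (h1 z) R ∧ Occurs (h2 z) R)

/-- A set `K` of attribute positions of relation `r` is a superkey of `r` with respect to
`Δ`: on every database satisfying `Δ`, tuples of `r` agreeing on `K` are equal. -/
def Superkey (Dom : Type) (Δ : List (Dep S)) (r : S.Rel) (K : Set (Fin (S.ar r))) : Prop :=
  ∀ D : DB S Dom, DBSat D Δ →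
    ∀ t1 ∈ D r, ∀ t2 ∈ D r, (∀ i ∈ K, t1 i = t2 i) → t1 = t2

/-- Relation symbols r and p (both binary). -/
inductive RelRP where
  | r | p

def Srp : Schema := ⟨RelRP, fun _ => 2⟩

/-- σ : r(X,Y) → ∃ Z. p(X,Z)   (X = 0, Y = 1, Z = 2). -/
def tgd16 : TGD Srp := ⟨[⟨RelRP.r, ![0, 1]⟩], [⟨RelRP.p, ![0, 2]⟩], {2}⟩

def Sigma16 : List (Dep Srp) := [Dep.tgd tgd16]

/-- The set-valued database D with R = {(a,b)} and P = {(a,c),(a,d)},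
encoding a = 0, b = 1, c = 2, d = 3. -/
def D16 : DB Srp ℕ := fun x =>
  match x with
  | .r => {![0, 1]}
  | .p => {![0, 2], ![0, 3]}

/-- Q(A) :- r(A,B)   (A = 0, B = 1). -/
def Q16 : CQ Srp := ⟨[0], [⟨RelRP.r, ![0, 1]⟩]⟩

/-- Q'(A) :- r(A,B), p(A,C)   (A = 0, B = 1, C = 2). -/
def Q16' : CQ Srp := ⟨[0], [⟨RelRP.r, ![0, 1]⟩, ⟨RelRP.p, ![0, 2]⟩]⟩

lemma mem_p16 (t : Fin 2 → ℕ) : t ∈ D16 RelRP.p ↔ t = ![0,2] ∨ t = ![0,3] := by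
  change t ∈ ({![0,2], ![0,3]} : Multiset (Fin 2 → ℕ)) ↔ _
  simp

lemma mem_r16 (t : Fin 2 → ℕ) : t ∈ D16 RelRP.r ↔ t = ![0,1] := by
  change t ∈ ({![0,1]} : Multiset (Fin 2 → ℕ)) ↔ _
  simp

lemma dbsat16 : DBSat D16 Sigma16 := by
  intro d hd
  simp only [Sigma16, List.mem_singleton] at hd
  subst hd
  intro γ hγ
  have h := hγ ⟨RelRP.r, ![0,1]⟩ (by simp [tgd16])
  replace h := (mem_r16 _).1 h
  have h0 : γ 0 = 0 := by
    have := congrFun h (0 : Fin 2); exact this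
  refine ⟨fun x => if x = 2 then 2 else γ x, ?_, ?_⟩
  · intro x hx
    simp only [tgd16, Finset.mem_singleton] at hx
    simp [hx]
  · intro a ha
    simp only [tgd16, List.mem_singleton] at ha
    subst ha
    refine (mem_p16 _).2 ?_
    left
    funext i; fin_cases i
    · exact h0
    · rfl

lemma vars16 : ∀ x, x ∈ Q16.vars ↔ x = 0 ∨ x = 1 := by
  intro x
  constructor
  · rintro (h | ⟨a, ha, i, hi⟩)
    · simp [Q16] at h; tauto
    · simp only [Q16, List.mem_singleton] at ha
      subst ha; fin_cases i <;> (subst hi; decide)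
  · rintro (h | h) <;> subst h
    · exact Or.inl (by simp [Q16])
    · exact Or.inr ⟨⟨RelRP.r, ![0,1]⟩, by simp [Q16], (1 : Fin 2), rfl⟩

lemma vars16' : ∀ x, x ∈ Q16'.vars ↔ x = 0 ∨ x = 1 ∨ x = 2 := by
  intro x
  constructor
  · rintro (h | ⟨a, ha, i, hi⟩)
    · simp [Q16'] at h; tauto
    · simp only [Q16', List.mem_cons, List.mem_singleton, List.not_mem_nil, or_false] at ha
      rcases ha with ha | ha <;> subst ha <;> fin_cases i <;> (subst hi; decide)
  · rintro (h | h | h) <;> subst h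
    · exact Or.inl (by simp [Q16'])
    · exact Or.inr ⟨⟨RelRP.r, ![0,1]⟩, by simp [Q16'], (1 : Fin 2), rfl⟩
    · exact Or.inr ⟨⟨RelRP.p, ![0,2]⟩, by simp [Q16'], (1 : Fin 2), rfl⟩

lemma bs16 : bsMult D16 Q16 [0] = 1 := by
  rw [bsMult, Nat.card_eq_one_iff_unique]
  constructor
  · constructor
    rintro ⟨γ, hc, hs, hh⟩ ⟨δ, hc', hs', hh'⟩
    have hγ0 : γ 0 = 0 := by simpa [Q16] using hh
    have hδ0 : δ 0 = 0 := by simpa [Q16] using hh'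
    have hγ1 : γ 1 = 1 := by
      have := hs ⟨RelRP.r, ![0,1]⟩ (by simp [Q16])
      replace this := (mem_r16 _).1 this
      exact congrFun this (1 : Fin 2)
    have hδ1 : δ 1 = 1 := by
      have := hs' ⟨RelRP.r, ![0,1]⟩ (by simp [Q16])
      replace this := (mem_r16 _).1 this
      exact congrFun this (1 : Fin 2)
    apply Subtype.ext
    funext x
    show γ x = δ x
    rcases (em (x = 0)) with h | h
    · subst h; rw [hγ0, hδ0]
    rcases (em (x = 1)) with h1 | h1
    · subst h1; rw [hγ1, hδ1]
    have hx : x ∉ Q16.vars := by rw [vars16]; tauto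
    rw [hc x hx, hc' x hx]
  · refine ⟨fun x => if x = 1 then 1 else 0, ?_, ?_, ?_⟩
    · intro x hx
      rw [vars16] at hx
      push_neg at hx
      simp [hx.2]
    · intro a ha
      simp only [Q16, List.mem_singleton] at ha
      subst ha
      refine (mem_r16 _).2 ?_
      funext i; fin_cases i <;> rfl
    · simp [Q16]

lemma bs16' : bsMult D16 Q16' [0] = 2 := by
  rw [bsMult]
  have e : {γ : ℕ → ℕ // Canon Q16' γ ∧ Sat D16 Q16'.body γ ∧ Q16'.hd.map γ = [0]} ≃ Bool := by
    have key : ∀ γ : ℕ → ℕ, Canon Q16' γ ∧ Sat D16 Q16'.body γ ∧ Q16'.hd.map γ = [0] →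
        γ 0 = 0 ∧ γ 1 = 1 ∧ (γ 2 = 2 ∨ γ 2 = 3) ∧ ∀ x, x ≠ 0 → x ≠ 1 → x ≠ 2 → γ x = 0 := by
      rintro γ ⟨hc, hs, hh⟩
      have hγ0 : γ 0 = 0 := by simpa [Q16'] using hh
      have hγ1 : γ 1 = 1 := by
        have := hs ⟨RelRP.r, ![0,1]⟩ (by simp [Q16'])
        replace this := (mem_r16 _).1 this
        exact congrFun this (1 : Fin 2)
      have hγ2 : γ 2 = 2 ∨ γ 2 = 3 := by
        have := hs ⟨RelRP.p, ![0,2]⟩ (by simp [Q16'])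
        replace this := (mem_p16 _).1 this
        rcases this with h | h
        · left; exact congrFun h (1 : Fin 2)
        · right; exact congrFun h (1 : Fin 2)
      refine ⟨hγ0, hγ1, hγ2, fun x h0 h1 h2 => ?_⟩
      exact hc x (by rw [vars16']; tauto)
    refine ⟨fun γ => decide (γ.1 2 = 3),
      fun b => ⟨fun x => if x = 1 then 1 else if x = 2 then (if b then 3 else 2) else 0, ?_, ?_, ?_⟩,
      ?_, ?_⟩
    · intro x hx
      rw [vars16'] at hx
      push_neg at hx
      simp [hx.2.1, hx.2.2]
    · intro a ha
      simp only [Q16', List.mem_cons, List.mem_singleton, List.not_mem_nil, or_false] at ha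
      rcases ha with ha | ha <;> subst ha
      · refine (mem_r16 _).2 ?_
        funext i; fin_cases i <;> rfl
      · refine (mem_p16 _).2 ?_
        cases b
        · left; funext i; fin_cases i <;> rfl
        · right; funext i; fin_cases i <;> rfl
    · simp [Q16']
    · rintro ⟨γ, hγ⟩
      obtain ⟨h0, h1, h2, hrest⟩ := key γ hγ
      apply Subtype.ext
      funext x
      show _ = γ x
      rcases em (x = 0) with hx0 | hx0
      · subst hx0; simp [h0]
      rcases em (x = 1) with hx1 | hx1
      · subst hx1; simp [h1]
      rcases em (x = 2) with hx2 | hx2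
      · subst hx2
        rcases h2 with h2 | h2 <;> simp [h2]
      · simp [hx1, hx2, hrest x hx0 hx1 hx2]
    · intro b
      cases b <;> simp
  rw [Nat.card_congr e]
  simp

/-- since the first position of P is not a superkey of P under {σ}, the
chase step adding p(A,C) to Q is unsound under bag-set semantics: the set-valued
database D16 satisfies {σ} and yields Q(D,BS) = {(a)} but Q'(D,BS) = {(a),(a)}. -/
theorem non_key_based_chase_step_unsound_bag_set :
    ¬ Superkey ℕ Sigma16 RelRP.p {(0 : Fin 2)} ∧
    IsSetDB D16 ∧
    DBSat D16 Sigma16 ∧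
    bsMult D16 Q16 [0] = 1 ∧
    bsMult D16 Q16' [0] = 2 := by
  refine ⟨?_, ?_, dbsat16, bs16, bs16'⟩
  · intro hk
    have h := hk D16 dbsat16 ![0,2] ((mem_p16 _).2 (Or.inl rfl)) ![0,3]
      ((mem_p16 _).2 (Or.inr rfl))
      (by intro i hi; cases hi; rfl)
    have := congrFun h (1 : Fin 2)
    simp at this
  · intro rel
    cases rel
    · exact Multiset.nodup_singleton _
    · refine Multiset.nodup_cons.2 ⟨?_, Multiset.nodup_singleton _⟩
      refine fun h' => absurd (Multiset.mem_singleton.1 h') ?_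
      intro h
      have := congrFun h (1 : Fin 2)
      simp at this
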